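/- Let G be a strongly connected digraph whose underlying undirected graph G⁻ is 2-connected, and let u,v be vertices such that G⁻ \ {u,v} is disconnected. Then for each component D of G⁻ \ {u,v}, the induced subdigraph G[V(D) ∪ {u,v}] contains a directed path of length at least two, either from u to v or from v to u. -/

import Mathlib

open SimpleGraph Set

variable {V W : Type*}

/-- An embedding witnessing that `G` contains a subdivision of `H` as a subgraph:
branch vertices are given by the injection `f`, and every edge of `H` is replaced by
a path of `G`, these paths being internally disjoint from each other and from the
branch vertices. -/
structure SubdivEmb (H : SimpleGraph W) (G : SimpleGraph V) where
  f : W → V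
  inj : Function.Injective f
  walk : ∀ ⦃a b : W⦄, H.Adj a b → G.Walk (f a) (f b)
  isPath : ∀ ⦃a b : W⦄ (h : H.Adj a b), (walk h).IsPath
  symm : ∀ ⦃a b : W⦄ (h : H.Adj a b), walk h.symm = (walk h).reverse
  branch : ∀ ⦃a b : W⦄ (h : H.Adj a b) (w : W), f w ∈ (walk h).support → w = a ∨ w = b
  disjoint : ∀ ⦃a b c d : W⦄ (h₁ : H.Adj a b) (h₂ : H.Adj c d), s(a,b) ≠ s(c,d) →
    ∀ x, x ∈ (walk h₁).support → x ∈ (walk h₂).support → x ∈ Set.range f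

/-- `G` contains a subdivision of `H` as a subgraph. -/
def ContainsSubdiv (G : SimpleGraph V) (H : SimpleGraph W) : Prop :=
  Nonempty (SubdivEmb H G)

/-- Witness that `G` is (exactly) a subdivision of `H`: a subdivision embedding
covering all vertices and edges of `G`. -/
structure SubdivIso (H : SimpleGraph W) (G : SimpleGraph V) extends SubdivEmb H G where
  vert_cover : ∀ x : V, x ∈ Set.range f ∨ ∃ (a b : W) (h : H.Adj a b), x ∈ (walk h).support
  edge_cover : ∀ e ∈ G.edgeSet, ∃ (a b : W) (h : H.Adj a b), e ∈ (walk h).edges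

/-- `G` is a subdivision of `H`. -/
def IsSubdivisionOf (G : SimpleGraph V) (H : SimpleGraph W) : Prop :=
  Nonempty (SubdivIso H G)

/-- Planarity, via Kuratowski's theorem: no subdivision of `K₅` nor of `K_{3,3}`
as a subgraph. -/
def Planar (G : SimpleGraph V) : Prop :=
  ¬ ContainsSubdiv G (completeGraph (Fin 5)) ∧
  ¬ ContainsSubdiv G (completeBipartiteGraph (Fin 3) (Fin 3))

/-- Outerplanarity, via the standard characterization: no subdivision of `K₄` nor
of `K_{2,3}` as a subgraph. -/
def Outerplanar (G : SimpleGraph V) : Prop :=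
  ¬ ContainsSubdiv G (completeGraph (Fin 4)) ∧
  ¬ ContainsSubdiv G (completeBipartiteGraph (Fin 2) (Fin 3))

/-- `G` is `k`-connected. -/
def KConnected (k : ℕ) (G : SimpleGraph V) : Prop :=
  k < Nat.card V ∧ ∀ s : Set V, s.ncard < k → (G.induce sᶜ).Connected

/-- There is no cycle of `G` all of whose edges lie in `F`. -/
def NoCycleIn (G : SimpleGraph V) (F : Set (Sym2 V)) : Prop :=
  ¬ ∃ (v : V) (c : G.Walk v v), c.IsCycle ∧ ∀ e ∈ c.edges, e ∈ F

/-- A nonplanar graph is almost-planar if it is 3-connected and the set of edges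
whose deletion leaves a nonplanar graph contains no cycle (i.e. is the edge set of
a forest). -/
def AlmostPlanar (G : SimpleGraph V) : Prop :=
  ¬ Planar G ∧ KConnected 3 G ∧
    NoCycleIn G {e | e ∈ G.edgeSet ∧ ¬ Planar (G.deleteEdges {e})}

/-- The `k`-rung Möbius ladder: a cycle of length `2k` with opposite vertices joined. -/
def mobiusLadder (k : ℕ) : SimpleGraph (Fin (2*k)) :=
  SimpleGraph.fromRel (fun a b => (b : ℕ) = ((a : ℕ) + 1) % (2*k) ∨ (b : ℕ) = ((a : ℕ) + k) % (2*k))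

/-- The `k`-wheel: a cycle of length `k` plus a hub (`none`) adjacent to every cycle vertex. -/
def wheelGraph (k : ℕ) : SimpleGraph (Option (Fin k)) :=
  SimpleGraph.fromRel (fun a b =>
    match a, b with
    | some i, some j => (j : ℕ) = ((i : ℕ) + 1) % k
    | some _, none => True
    | none, some _ => True
    | none, none => False)

/-- The graph `U₈` (vertices `p_1,…,p_8` are `0,…,7`). -/
def U8 : SimpleGraph (Fin 8) :=
  SimpleGraph.fromRel (fun a b =>
    ((a:ℕ), (b:ℕ)) ∈ [(0,4),(0,6),(0,3),(1,5),(1,7),(1,3),(2,3),(2,4),(2,5),(2,6),(2,7),(4,5),(6,7)])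

/-- The graph `W₈` (vertices `b_1,…,b_8` are `0,…,7`). -/
def W8 : SimpleGraph (Fin 8) :=
  SimpleGraph.fromRel (fun a b =>
    ((a:ℕ), (b:ℕ)) ∈ [(0,1),(1,2),(1,3),(2,4),(3,4),(2,5),(3,6),(4,7),(5,7),(6,7),(0,5),(0,6),(0,4)])

/-- A digraph with a specified vertex set (so that subdigraphs on fewer vertices
make sense). -/
structure Dgraph (V : Type _) where
  verts : Set V
  Adj : V → V → Prop
  mem_of_adj : ∀ ⦃u v : V⦄, Adj u v → u ∈ verts ∧ v ∈ verts

namespace Dgraph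

/-- `D` has no loops and no directed cycles of length two. -/
def NoDigon (D : Dgraph V) : Prop := ∀ u v, D.Adj u v → ¬ D.Adj v u

/-- The underlying (simple) graph of a digraph. -/
def und (D : Dgraph V) : SimpleGraph V where
  Adj u v := u ≠ v ∧ (D.Adj u v ∨ D.Adj v u)
  symm := ⟨by
    intro u v h
    exact ⟨Ne.symm h.1, h.2.symm⟩⟩
  loopless := ⟨by
    intro v h
    exact h.1 rfl⟩

/-- Subdigraph containment. -/
def Le (D₁ D₂ : Dgraph V) : Prop :=
  D₁.verts ⊆ D₂.verts ∧ ∀ ⦃u v⦄, D₁.Adj u v → D₂.Adj u v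

/-- A walk of the underlying graph is directed if all its darts are arcs of `D`. -/
def DirWalk (D : Dgraph V) {u v : V} (w : D.und.Walk u v) : Prop :=
  ∀ d ∈ w.darts, D.Adj d.toProd.1 d.toProd.2

/-- Strong connectivity: every vertex can reach every other vertex by a directed walk. -/
def Strong (D : Dgraph V) : Prop :=
  ∀ u ∈ D.verts, ∀ v ∈ D.verts, ∃ w : D.und.Walk u v, D.DirWalk w

/-- Delete the single arc `(a,b)` from `D`. -/
def delArc (D : Dgraph V) (a b : V) : Dgraph V where
  verts := D.verts
  Adj u v := D.Adj u v ∧ ¬ (u = a ∧ v = b)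
  mem_of_adj := fun _ _ h => D.mem_of_adj h.1

/-- `D` is planar if its underlying graph is. -/
def Planar' (D : Dgraph V) : Prop := Planar D.und

/-- `D` is series-parallel if its underlying graph contains no subdivision of `K₄`. -/
def SeriesParallel (D : Dgraph V) : Prop :=
  ¬ ContainsSubdiv D.und (completeGraph (Fin 4))

end Dgraph

/-- A witness that the digraph `D` is (exactly) a directed subdivision of the digraph `H`:
each arc `a → b` of `H` is replaced by a directed path of `D` from `f a` to `f b`, these
paths being internally disjoint, avoiding branch vertices internally, and covering all
vertices and arcs of `D`. -/
structure DirSubdivEmb (H : Dgraph W) (D : Dgraph V) where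
  f : W → V
  inj : Function.Injective f
  maps_verts : ∀ w ∈ H.verts, f w ∈ D.verts
  walk : ∀ ⦃a b : W⦄, H.Adj a b → D.und.Walk (f a) (f b)
  dir : ∀ ⦃a b : W⦄ (h : H.Adj a b), D.DirWalk (walk h)
  isPath : ∀ ⦃a b : W⦄ (h : H.Adj a b), (walk h).IsPath
  branch : ∀ ⦃a b : W⦄ (h : H.Adj a b) (w : W), w ∈ H.verts →
    f w ∈ (walk h).support → w = a ∨ w = b
  disjoint : ∀ ⦃a b c d : W⦄ (h₁ : H.Adj a b) (h₂ : H.Adj c d), (a,b) ≠ (c,d) →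
    ∀ x, x ∈ (walk h₁).support → x ∈ (walk h₂).support → ∃ w ∈ H.verts, f w = x
  vert_cover : ∀ x ∈ D.verts, (∃ w ∈ H.verts, f w = x) ∨
    ∃ (a b : W) (h : H.Adj a b), x ∈ (walk h).support
  edge_cover : ∀ ⦃x y : V⦄, D.Adj x y →
    ∃ (a b : W) (h : H.Adj a b), ∃ d ∈ (walk h).darts, d.toProd = (x, y)

/-- The digraph `D` is a directed subdivision of (a copy of) `H`. -/
def Dgraph.IsDirSubdivOf (D : Dgraph V) (H : Dgraph W) : Prop :=
  Nonempty (DirSubdivEmb H D)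

/-- Build a digraph on `Fin n` from a list of arcs. -/
def arcsD (n : ℕ) (l : List (ℕ × ℕ)) : Dgraph (Fin n) where
  verts := Set.univ
  Adj a b := ((a:ℕ), (b:ℕ)) ∈ l
  mem_of_adj := fun _ _ _ => ⟨trivial, trivial⟩

/-- The digraph whose directed subdivisions are the strong thetas: two directed paths
of length two from `0` to `1` (through `2` resp. `3`) together with a directed return
path `1 → 4 → 0`. -/
def thetaD : Dgraph (Fin 5) := arcsD 5 [(0,2),(2,1),(0,3),(3,1),(1,4),(4,0)]

/-- The digraph whose directed subdivisions are the reinforced thetas: three directed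
paths of length two from `0` to `1` together with the arc `1 → 0`. -/
def reinfThetaD : Dgraph (Fin 5) := arcsD 5 [(0,2),(2,1),(0,3),(3,1),(0,4),(4,1),(1,0)]

/-- The strong directed `K₄` (the strongly connected orientation of `K₄`, unique up
to isomorphism). -/
def strongK4D : Dgraph (Fin 4) := arcsD 4 [(0,1),(1,2),(2,3),(3,0),(0,2),(1,3)]

/-- The `2k`-diwheel: a cycle of length `2k` plus a hub (`none`) adjacent to every
cycle vertex, oriented so that every triangle is a directed triangle. -/
def diwheelD (k : ℕ) : Dgraph (Option (Fin (2*k))) where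
  verts := Set.univ
  Adj a b :=
    match a, b with
    | some i, some j => Even (i:ℕ) ∧
        (((j:ℕ) = ((i:ℕ) + 1) % (2*k)) ∨ ((i:ℕ) = ((j:ℕ) + 1) % (2*k)))
    | some i, none => Odd (i:ℕ)
    | none, some i => Even (i:ℕ)
    | none, none => False
  mem_of_adj := fun _ _ _ => ⟨trivial, trivial⟩

/-- Minimality under subdigraph containment among strongly connected nonplanar digraphs. -/
def MinStrongNonplanar (G : Dgraph V) : Prop :=
  G.Strong ∧ ¬ G.Planar' ∧
    ∀ D' : Dgraph V, D'.Le G → D'.Strong → ¬ D'.Planar' →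
      (D'.verts = G.verts ∧ ∀ u v, D'.Adj u v ↔ G.Adj u v)

/-- A Kuratowski digraph: minimal strongly connected nonplanar, and not a directed
subdivision of a smaller digraph. -/
def KuratowskiDigraph (G : Dgraph V) : Prop :=
  MinStrongNonplanar G ∧
    ¬ ∃ H : Dgraph V, H.verts.ncard < G.verts.ncard ∧ G.IsDirSubdivOf H

/-- The unordered pair `{x,y}` equals `{a,b}`. -/
def pairOf (x y a b : V) : Prop := (x = a ∧ y = b) ∨ (x = b ∧ y = a)

/-- `j` follows `i` in the cyclic order on `Fin n`. -/
def CycPair (n : ℕ) (i j : Fin n) : Prop :=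
  (j:ℕ) = (i:ℕ) + 1 ∨ ((i:ℕ) = n - 1 ∧ (j:ℕ) = 0)

/-- Given the cyclic list `l` of vertices of a cycle `C`, the chords `ab` and `cd`
`C`-cross: `a,b,c,d` are distinct and both paths of `C` between `a` and `b` contain
one of `c,d` (equivalently, exactly one of `c,d` lies strictly between `a` and `b`
in the list). -/
def CCross [DecidableEq V] (l : List V) (a b c d : V) : Prop :=
  ([a, b, c, d] : List V).Nodup ∧
  ∃ x y, ((x = c ∧ y = d) ∨ (x = d ∧ y = c)) ∧
    (min (l.idxOf a) (l.idxOf b) < l.idxOf x ∧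
      l.idxOf x < max (l.idxOf a) (l.idxOf b)) ∧
    ¬ (min (l.idxOf a) (l.idxOf b) < l.idxOf y ∧
      l.idxOf y < max (l.idxOf a) (l.idxOf b))

/-- A Möbius chain: a nonplanar graph obtained from a spanning cycle `C` by adding
chords so that every two chords `C`-cross or share an end, every vertex is an end of
some chord, and no cycle consists entirely of chords. -/
def IsMobiusChain [DecidableEq V] (G : SimpleGraph V) : Prop :=
  ¬ Planar G ∧
  ∃ (v : V) (C : G.Walk v v), C.IsCycle ∧ (∀ x : V, x ∈ C.support) ∧
    (∀ a b c d : V, G.Adj a b → s(a,b) ∉ C.edges → G.Adj c d → s(c,d) ∉ C.edges →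
      s(a,b) ≠ s(c,d) →
      (a = c ∨ a = d ∨ b = c ∨ b = d) ∨ CCross C.support.tail a b c d) ∧
    (∀ x : V, ∃ y, G.Adj x y ∧ s(x,y) ∉ C.edges) ∧
    NoCycleIn G {e | e ∈ G.edgeSet ∧ e ∉ C.edges}

/-- A scallop. -/
def IsScallop (G : SimpleGraph V) : Prop :=
  KConnected 3 G ∧
  (Nonempty (G ≃g completeGraph (Fin 5)) ∨
   ∃ (n : ℕ) (hn : 3 ≤ n) (c : Fin n → V) (u v w : V),
     Function.Injective c ∧ (∀ i, c i ≠ u ∧ c i ≠ v ∧ c i ≠ w) ∧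
     u ≠ v ∧ u ≠ w ∧ v ≠ w ∧
     (∀ x : V, (∃ i, x = c i) ∨ x = u ∨ x = v ∨ x = w) ∧
     (∀ i j, CycPair n i j → G.Adj (c i) (c j)) ∧
     G.Adj u v ∧ G.Adj u (c ⟨0, by omega⟩) ∧ G.Adj u (c ⟨n-1, by omega⟩) ∧
     G.Adj v (c ⟨0, by omega⟩) ∧ G.Adj v (c ⟨n-1, by omega⟩) ∧
     G.Adj w u ∧ G.Adj w v ∧
     (∀ i : Fin n, (i:ℕ) ≠ 0 → (i:ℕ) ≠ n - 1 → G.Adj w (c i)) ∧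
     (∀ x y, G.Adj x y →
       (∃ i j, CycPair n i j ∧ pairOf x y (c i) (c j)) ∨
       pairOf x y u v ∨
       pairOf x y u (c ⟨0, by omega⟩) ∨ pairOf x y u (c ⟨n-1, by omega⟩) ∨
       pairOf x y v (c ⟨0, by omega⟩) ∨ pairOf x y v (c ⟨n-1, by omega⟩) ∨
       pairOf x y w u ∨ pairOf x y w v ∨ (∃ i, pairOf x y w (c i))))

/-- A clam. -/
def IsClam (G : SimpleGraph V) : Prop :=
  KConnected 3 G ∧
  ∃ (n : ℕ) (_ : 3 ≤ n) (c : Fin n → V) (u v : V) (j : Fin n),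
    1 ≤ (j:ℕ) ∧ (j:ℕ) ≤ n - 2 ∧
    Function.Injective c ∧ (∀ i, c i ≠ u ∧ c i ≠ v) ∧ u ≠ v ∧
    (∀ x : V, (∃ i, x = c i) ∨ x = u ∨ x = v) ∧
    (∀ i k, CycPair n i k → G.Adj (c i) (c k)) ∧
    G.Adj u v ∧
    (∀ i : Fin n, G.Adj u (c i) ↔ ((i:ℕ) ≤ (j:ℕ) ∨ (i:ℕ) = n - 1)) ∧
    (∀ i : Fin n, G.Adj v (c i) ↔ ((j:ℕ) ≤ (i:ℕ) ∨ (i:ℕ) = 0)) ∧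
    (∀ x y, G.Adj x y →
      (∃ i k, CycPair n i k ∧ pairOf x y (c i) (c k)) ∨
      pairOf x y u v ∨ (∃ i, pairOf x y u (c i)) ∨ (∃ i, pairOf x y v (c i)))

/-- A whelk. -/
def IsWhelk (G : SimpleGraph V) : Prop :=
  KConnected 3 G ∧
  ∃ (n : ℕ) (_ : 3 ≤ n) (c : Fin n → V) (u v : V) (I J : Fin n),
    1 ≤ (I:ℕ) ∧ (I:ℕ) < (J:ℕ) ∧ (J:ℕ) ≤ n - 1 ∧
    Function.Injective c ∧ (∀ i, c i ≠ u ∧ c i ≠ v) ∧ u ≠ v ∧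
    (∀ x : V, (∃ i, x = c i) ∨ x = u ∨ x = v) ∧
    (∀ i k, CycPair n i k → G.Adj (c i) (c k)) ∧
    G.Adj u v ∧
    (∀ t : Fin n, G.Adj u (c t) ↔ (t:ℕ) ≤ (J:ℕ)) ∧
    (∀ t : Fin n, G.Adj v (c t) ↔ ((J:ℕ) ≤ (t:ℕ) ∨ (t:ℕ) = (I:ℕ))) ∧
    (∀ x y, G.Adj x y →
      (∃ i k, CycPair n i k ∧ pairOf x y (c i) (c k)) ∨
      pairOf x y u v ∨ (∃ i, pairOf x y u (c i)) ∨ (∃ i, pairOf x y v (c i)))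

/-- A double wheel: a 3-connected nonplanar graph consisting of a cycle plus two
adjacent vertices `u,v`, with at most one vertex of the cycle adjacent to both. -/
def IsDoubleWheel (G : SimpleGraph V) : Prop :=
  KConnected 3 G ∧ ¬ Planar G ∧
  ∃ (n : ℕ) (_ : 3 ≤ n) (c : Fin n → V) (u v : V),
    Function.Injective c ∧ (∀ i, c i ≠ u ∧ c i ≠ v) ∧ u ≠ v ∧
    (∀ x : V, (∃ i, x = c i) ∨ x = u ∨ x = v) ∧
    (∀ i k, CycPair n i k → G.Adj (c i) (c k)) ∧
    G.Adj u v ∧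
    (∀ x y, G.Adj x y →
      (∃ i k, CycPair n i k ∧ pairOf x y (c i) (c k)) ∨
      pairOf x y u v ∨ (∃ i, pairOf x y u (c i)) ∨ (∃ i, pairOf x y v (c i))) ∧
    (∀ i k : Fin n, G.Adj u (c i) → G.Adj v (c i) → G.Adj u (c k) → G.Adj v (c k) → i = k)

/-- A conch. -/
def IsConch (G : SimpleGraph V) : Prop :=
  KConnected 3 G ∧
  ∃ (p1 p2 p3 : V) (P Q : G.Walk p1 p2) (R : G.Walk p2 p3),
    p1 ≠ p2 ∧ p2 ≠ p3 ∧ p1 ≠ p3 ∧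
    P.IsPath ∧ Q.IsPath ∧ R.IsPath ∧
    p3 ∉ P.support ∧ p3 ∉ Q.support ∧ p1 ∉ R.support ∧
    (∀ x, x ∈ P.support → x ∈ Q.support → x = p1 ∨ x = p2) ∧
    (∀ x, x ∈ P.support → x ∈ R.support → x = p2) ∧
    (∀ x, x ∈ Q.support → x ∈ R.support → x = p2) ∧
    (∀ x : V, x ∈ P.support ∨ x ∈ Q.support ∨ x ∈ R.support ∨ x = p3) ∧
    (∃ x y, x ≠ y ∧ (x ∈ P.support ∧ x ≠ p1 ∧ x ≠ p2) ∧ (y ∈ P.support ∧ y ≠ p1 ∧ y ≠ p2) ∧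
      G.Adj p3 x ∧ G.Adj p3 y) ∧
    (∃ x y, x ≠ y ∧ (x ∈ Q.support ∧ x ≠ p1 ∧ x ≠ p2) ∧ (y ∈ Q.support ∧ y ≠ p1 ∧ y ≠ p2) ∧
      G.Adj p3 x ∧ G.Adj p3 y) ∧
    (∃ x y, x ≠ y ∧ (x ∈ R.support ∧ x ≠ p2 ∧ x ≠ p3) ∧ (y ∈ R.support ∧ y ≠ p2 ∧ y ≠ p3) ∧
      G.Adj p1 x ∧ G.Adj p1 y) ∧
    (∀ a b, G.Adj a b →
      s(a,b) ∈ P.edges ∨ s(a,b) ∈ Q.edges ∨ s(a,b) ∈ R.edges ∨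
      (∃ x, ((x ∈ P.support ∨ x ∈ Q.support) ∧ x ≠ p1 ∧ x ≠ p2) ∧ pairOf a b p3 x) ∨
      (∃ x, (x ∈ R.support ∧ x ≠ p2 ∧ x ≠ p3) ∧ pairOf a b p1 x) ∨
      pairOf a b p1 p2 ∨ pairOf a b p1 p3)

/-- A mussel. -/
def IsMussel (G : SimpleGraph V) : Prop :=
  KConnected 3 G ∧
  ∃ (p1 p2 p3 : V) (P Q R : G.Walk p1 p2),
    p1 ≠ p2 ∧ p2 ≠ p3 ∧ p1 ≠ p3 ∧
    P.IsPath ∧ Q.IsPath ∧ R.IsPath ∧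
    3 ≤ P.length ∧ 3 ≤ Q.length ∧ 3 ≤ R.length ∧
    p3 ∉ P.support ∧ p3 ∉ Q.support ∧ p3 ∉ R.support ∧
    (∀ x, x ∈ P.support → x ∈ Q.support → x = p1 ∨ x = p2) ∧
    (∀ x, x ∈ P.support → x ∈ R.support → x = p1 ∨ x = p2) ∧
    (∀ x, x ∈ Q.support → x ∈ R.support → x = p1 ∨ x = p2) ∧
    (∀ x : V, x ∈ P.support ∨ x ∈ Q.support ∨ x ∈ R.support ∨ x = p3) ∧
    (∀ x, ((x ∈ P.support ∨ x ∈ Q.support ∨ x ∈ R.support) ∧ x ≠ p1 ∧ x ≠ p2) →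
      G.Adj p3 x) ∧
    ¬ (G.Adj p1 p2 ∧ G.Adj p2 p3 ∧ G.Adj p1 p3) ∧
    (∀ a b, G.Adj a b →
      s(a,b) ∈ P.edges ∨ s(a,b) ∈ Q.edges ∨ s(a,b) ∈ R.edges ∨
      (∃ x, ((x ∈ P.support ∨ x ∈ Q.support ∨ x ∈ R.support) ∧ x ≠ p1 ∧ x ≠ p2) ∧
        pairOf a b p3 x) ∨
      pairOf a b p1 p2 ∨ pairOf a b p1 p3 ∨ pairOf a b p2 p3)

/-- `O` is an orientation of `G`. -/
def IsOrientation (G : SimpleGraph V) (O : V → V → Prop) : Prop :=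
  (∀ u v, G.Adj u v ↔ (O u v ∨ O v u)) ∧ ∀ u v, O u v → ¬ O v u

/-- Every fundamental cycle of the spanning tree `T` of `G` is a directed cycle in
the orientation `O`. -/
def GoodOrient (G T : SimpleGraph V) (O : V → V → Prop) : Prop :=
  ∀ x y, G.Adj x y → ¬ T.Adj x y → ∀ p : T.Walk y x, p.IsPath →
    (O x y ∧ ∀ d ∈ p.darts, O d.toProd.1 d.toProd.2) ∨
    (O y x ∧ ∀ d ∈ p.darts, O d.toProd.2 d.toProd.1)

/-- The rungs of the `k`-rung Möbius ladder. -/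
def isRung (k : ℕ) (a b : Fin (2*k)) : Prop :=
  (b:ℕ) = ((a:ℕ) + k) % (2*k) ∨ (a:ℕ) = ((b:ℕ) + k) % (2*k)


open SimpleGraph Set

namespace Stmt1Aux

variable {V : Type*} (G : Dgraph V) (u v : V)

def InK (K : (G.und.induce ({u, v}ᶜ : Set V)).ConnectedComponent) (x : V) : Prop :=
  ∃ y : ({u, v}ᶜ : Set V), y ∈ K.supp ∧ (y : V) = x

variable {K : (G.und.induce ({u, v}ᶜ : Set V)).ConnectedComponent}

lemma InK.not_mem {x : V} (h : InK G u v K x) : x ∉ ({u, v} : Set V) := by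
  obtain ⟨y, _, rfl⟩ := h; exact y.2

lemma dirWalk_cons {a b c : V} (h : G.und.Adj a b) (w : G.und.Walk b c) :
    G.DirWalk (Walk.cons h w) ↔ G.Adj a b ∧ G.DirWalk w := by
  constructor
  · intro hd
    refine ⟨hd ⟨(a, b), h⟩ (by simp [Walk.darts_cons]), fun d hd' => hd d ?_⟩
    simp [Walk.darts_cons, hd']
  · rintro ⟨h1, h2⟩ d hd'
    rw [Walk.darts_cons, List.mem_cons] at hd'
    rcases hd' with rfl | hd'
    · exact h1
    · exact h2 d hd'

lemma dirWalk_nil {a : V} : G.DirWalk (Walk.nil : G.und.Walk a a) := by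
  intro d hd; simp [Walk.darts_nil] at hd

lemma dirWalk_concat {a b c : V} (w : G.und.Walk a b) (h : G.und.Adj b c)
    (hd : G.DirWalk w) (harc : G.Adj b c) : G.DirWalk (w.concat h) := by
  intro d hd'
  rw [Walk.darts_concat, List.concat_eq_append, List.mem_append] at hd'
  rcases hd' with hd' | hd'
  · exact hd d hd'
  · simp only [List.mem_singleton] at hd'; subst hd'; exact harc

lemma InK.adj {x z : V} (hx : InK G u v K x) (hz : z ∉ ({u, v} : Set V))
    (h : G.und.Adj x z) : InK G u v K z := by
  obtain ⟨y, hy, rfl⟩ := hx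
  refine ⟨⟨z, hz⟩, ?_, rfl⟩
  rw [ConnectedComponent.mem_supp_iff] at hy ⊢
  rw [← hy]
  have hadj : (G.und.induce ({u, v}ᶜ : Set V)).Adj ⟨z, hz⟩ y := h.symm
  exact ConnectedComponent.sound hadj.reachable

def GoodFrom (K : (G.und.induce ({u, v}ᶜ : Set V)).ConnectedComponent) (a x : V) : Prop :=
  ∃ w : G.und.Walk a x, G.DirWalk w ∧ ∀ z ∈ w.support, z = a ∨ InK G u v K z

def GoodTo (K : (G.und.induce ({u, v}ᶜ : Set V)).ConnectedComponent) (x c : V) : Prop :=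
  ∃ w : G.und.Walk x c, G.DirWalk w ∧ ∀ z ∈ w.support, z = c ∨ InK G u v K z

lemma goodFrom_refl (a : V) : GoodFrom G u v K a a :=
  ⟨Walk.nil, dirWalk_nil G, by simp⟩

lemma GoodFrom.extend {a s t : V} (h : GoodFrom G u v K a s) (harc : G.Adj s t)
    (hst : s ≠ t) (ht : InK G u v K t) : GoodFrom G u v K a t := by
  obtain ⟨w, hd, hsup⟩ := h
  have hadj : G.und.Adj s t := ⟨hst, Or.inl harc⟩
  refine ⟨w.concat hadj, dirWalk_concat G w hadj hd harc, ?_⟩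
  intro z hz
  rw [Walk.support_concat, List.mem_append] at hz
  rcases hz with hz | hz
  · exact hsup z hz
  · simp only [List.mem_singleton] at hz; subst hz; exact Or.inr ht

lemma goodFrom_mk {a z x : V} (h : G.und.Adj a z) (harc : G.Adj a z)
    (w' : G.und.Walk z x) (hd : G.DirWalk w')
    (hsup : ∀ t ∈ w'.support, InK G u v K t) : GoodFrom G u v K a x := by
  refine ⟨Walk.cons h w', (dirWalk_cons G h w').2 ⟨harc, hd⟩, ?_⟩
  intro t ht
  rw [Walk.support_cons, List.mem_cons] at ht
  rcases ht with rfl | ht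
  · exact Or.inl rfl
  · exact Or.inr (hsup t ht)

lemma goodTo_mk {x z c : V} (w' : G.und.Walk x z) (hd : G.DirWalk w')
    (h : G.und.Adj z c) (harc : G.Adj z c)
    (hsup : ∀ t ∈ w'.support, InK G u v K t) : GoodTo G u v K x c := by
  refine ⟨w'.concat h, dirWalk_concat G w' h hd harc, ?_⟩
  intro t ht
  rw [Walk.support_concat, List.mem_append] at ht
  rcases ht with ht | ht
  · exact Or.inr (hsup t ht)
  · simp only [List.mem_singleton] at ht; subst ht; exact Or.inl rfl

lemma goodTo_single {p c : V} (harc : G.Adj p c) (hpc : p ≠ c) (hp : InK G u v K p) :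
    GoodTo G u v K p c :=
  goodTo_mk G u v Walk.nil (dirWalk_nil G) ⟨hpc, Or.inl harc⟩ harc (by simpa using hp)

lemma sameK : ∀ {p q : V} (w : G.und.Walk p q),
    (∀ z ∈ w.support, z ∉ ({u, v} : Set V)) →
    InK G u v K p → ∀ z ∈ w.support, InK G u v K z := by
  intro p q w
  induction w with
  | nil =>
    intro _ hp z hz
    rw [Walk.support_nil, List.mem_singleton] at hz; subst hz; exact hp
  | @cons p b q h w ih =>
    intro hav hp z hz
    have hbmem : b ∈ (Walk.cons h w).support := by
      rw [Walk.support_cons]; exact List.mem_cons_of_mem _ w.start_mem_support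
    have hb : InK G u v K b := InK.adj G u v hp (hav b hbmem) h
    rw [Walk.support_cons, List.mem_cons] at hz
    rcases hz with rfl | hz
    · exact hp
    · exact ih (fun t ht => hav t (by rw [Walk.support_cons]; exact List.mem_cons_of_mem _ ht))
        hb z hz

lemma sameK' {p q : V} (w : G.und.Walk p q)
    (hav : ∀ z ∈ w.support, z ∉ ({u, v} : Set V))
    (hq : InK G u v K q) : ∀ z ∈ w.support, InK G u v K z := by
  intro z hz
  exact sameK G u v w.reverse (by simpa [Walk.support_reverse] using hav) hq z
    (by simp [Walk.support_reverse, hz])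

lemma L1 : ∀ {y x : V} (w : G.und.Walk y x), G.DirWalk w → x ∉ ({u, v} : Set V) →
    (∀ z ∈ w.support, z ∉ ({u, v} : Set V)) ∨
    ∃ (a z : V), a ∈ ({u, v} : Set V) ∧ ∃ (h : G.und.Adj a z) (w' : G.und.Walk z x),
      G.Adj a z ∧ G.DirWalk w' ∧ ∀ t ∈ w'.support, t ∉ ({u, v} : Set V) := by
  intro y x w
  induction w with
  | nil =>
    intro _ hx
    left
    intro z hz
    rw [Walk.support_nil, List.mem_singleton] at hz; subst hz; exact hx
  | @cons y b x h w ih =>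
    intro hd hx
    obtain ⟨harc, hd'⟩ := (dirWalk_cons G h w).1 hd
    rcases ih hd' hx with h1 | h2
    · by_cases hy : y ∈ ({u, v} : Set V)
      · exact Or.inr ⟨y, b, hy, h, w, harc, hd', h1⟩
      · left
        intro z hz
        rw [Walk.support_cons, List.mem_cons] at hz
        rcases hz with rfl | hz
        · exact hy
        · exact h1 z hz
    · exact Or.inr h2

lemma L2 : ∀ {x b : V} (w : G.und.Walk x b), G.DirWalk w → x ∉ ({u, v} : Set V) →
    b ∈ ({u, v} : Set V) →
    ∃ (c z : V), c ∈ ({u, v} : Set V) ∧ ∃ (h : G.und.Adj z c) (w' : G.und.Walk x z),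
      G.Adj z c ∧ G.DirWalk w' ∧ ∀ t ∈ w'.support, t ∉ ({u, v} : Set V) := by
  intro x b w
  induction w with
  | nil => intro _ hx hb; exact absurd hb hx
  | @cons x z' b h w ih =>
    intro hd hx hb
    obtain ⟨harc, hd'⟩ := (dirWalk_cons G h w).1 hd
    by_cases hz' : z' ∈ ({u, v} : Set V)
    · refine ⟨z', x, hz', h, Walk.nil, harc, dirWalk_nil G, ?_⟩
      intro t ht
      rw [Walk.support_nil, List.mem_singleton] at ht; subst ht; exact hx
    · obtain ⟨c, z, hc, h2, w', harc2, hd2, hav⟩ := ih hd' hz' hb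
      refine ⟨c, z, hc, h2, Walk.cons h w', harc2, (dirWalk_cons G h w').2 ⟨harc, hd2⟩, ?_⟩
      intro t ht
      rw [Walk.support_cons, List.mem_cons] at ht
      rcases ht with rfl | ht
      · exact hx
      · exact hav t ht

lemma L3 {t s : V} : ∀ {x0 : V} (w : G.und.Walk x0 t), (∀ z ∈ w.support, z ≠ s) → x0 ≠ t →
    ∃ (p : V) (w'' : G.und.Walk x0 p), G.und.Adj p t ∧
      ∀ z ∈ w''.support, z ≠ t ∧ z ≠ s := by
  intro x0 w
  induction w with
  | nil => intro _ hne; exact absurd rfl hne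
  | @cons x0 z' t h w ih =>
    intro hav hne
    by_cases hz' : z' = t
    · subst hz'
      refine ⟨x0, Walk.nil, h, ?_⟩
      intro z hz
      rw [Walk.support_nil, List.mem_singleton] at hz; subst hz
      exact ⟨hne, hav _ (Walk.start_mem_support _)⟩
    · obtain ⟨p, w'', hadj, hav'⟩ := ih
        (fun z hz => hav z (by rw [Walk.support_cons]; exact List.mem_cons_of_mem _ hz)) hz'
      refine ⟨p, Walk.cons h w'', hadj, ?_⟩
      intro z hz
      rw [Walk.support_cons, List.mem_cons] at hz
      rcases hz with rfl | hz
      · exact ⟨hne, hav z (Walk.start_mem_support _)⟩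
      · exact hav' z hz

lemma exists_dart_of_length_one {G' : SimpleGraph V} : ∀ {a b : V} (p : G'.Walk a b),
    p.length = 1 → ∃ d ∈ p.darts, d.toProd = (a, b) := by
  intro a b p
  cases p with
  | nil => simp
  | cons hadj q =>
    cases q with
    | nil => intro _; exact ⟨⟨(a, b), hadj⟩, by simp [Walk.darts_cons], rfl⟩
    | cons h2 q2 => intro hl; simp [Walk.length_cons] at hl

end Stmt1Aux

open Stmt1Aux
/-- if `G` is strong with 2-connected underlying graph and `{u,v}` is a
cutset, then for every component `K` of `G⁻ \ {u,v}` there is a directed path of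
length at least two between `u` and `v` (in one of the two directions) all of whose
vertices lie in `K ∪ {u,v}`. -/
theorem stmt1 {V : Type*} [Fintype V] (G : Dgraph V) (hv : G.verts = Set.univ)
    (hnd : G.NoDigon) (hs : G.Strong) (h2 : KConnected 2 G.und)
    (u v : V) (huv : u ≠ v)
    (hdis : ¬ (G.und.induce ({u, v}ᶜ : Set V)).Connected)
    (K : (G.und.induce ({u, v}ᶜ : Set V)).ConnectedComponent) :
    ∃ (a b : V) (w : G.und.Walk a b),
      ({a, b} : Set V) = {u, v} ∧ G.DirWalk w ∧ w.IsPath ∧ 2 ≤ w.length ∧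
      ∀ x ∈ w.support, x = u ∨ x = v ∨
        ∃ y : ({u, v}ᶜ : Set V), y ∈ K.supp ∧ (y : V) = x := by
  classical
  by_contra hcon
  have hvert : ∀ x : V, x ∈ G.verts := fun x => hv ▸ Set.mem_univ x
  have build : ∀ a b x, ({a, b} : Set V) = ({u, v} : Set V) → a ≠ b → InK G u v K x →
      GoodFrom G u v K a x → GoodTo G u v K x b → False := by
    intro a b x hab hne hx h1 h2
    obtain ⟨w1, hd1, hs1⟩ := h1
    obtain ⟨w2, hd2, hs2⟩ := h2
    have ha : a ∈ ({u, v} : Set V) := by rw [← hab]; simp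
    have hb : b ∈ ({u, v} : Set V) := by rw [← hab]; simp
    have hnIa : ¬ InK G u v K a := fun h => InK.not_mem G u v h ha
    have hnIb : ¬ InK G u v K b := fun h => InK.not_mem G u v h hb
    set w := (w1.append w2).bypass with hw
    have hsupw : ∀ z ∈ w.support, z = u ∨ z = v ∨
        ∃ y : ({u, v}ᶜ : Set V), y ∈ K.supp ∧ (y : V) = z := by
      intro z hz
      have hz' := Walk.support_bypass_subset _ hz
      rw [Walk.support_append, List.mem_append] at hz'
      have hz'' : z = a ∨ z = b ∨ InK G u v K z := by
        rcases hz' with hz' | hz'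
        · rcases hs1 z hz' with h | h
          · exact Or.inl h
          · exact Or.inr (Or.inr h)
        · rcases hs2 z (List.mem_of_mem_tail hz') with h | h
          · exact Or.inr (Or.inl h)
          · exact Or.inr (Or.inr h)
      have ha' : a = u ∨ a = v := by simpa using ha
      have hb' : b = u ∨ b = v := by simpa using hb
      rcases hz'' with rfl | rfl | h
      · rcases ha' with rfl | rfl
        · exact Or.inl rfl
        · exact Or.inr (Or.inl rfl)
      · rcases hb' with rfl | rfl
        · exact Or.inl rfl
        · exact Or.inr (Or.inl rfl)
      · exact Or.inr (Or.inr h)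
    have hdw : G.DirWalk w := by
      intro d hd
      have hd' := Walk.darts_bypass_subset _ hd
      rw [Walk.darts_append, List.mem_append] at hd'
      rcases hd' with h | h
      · exact hd1 d h
      · exact hd2 d h
    have hlen0 : w.length ≠ 0 := fun h0 => hne (Walk.eq_of_length_eq_zero h0)
    have hlen1 : w.length ≠ 1 := by
      intro h1
      obtain ⟨d, hdm, hdp⟩ := exists_dart_of_length_one w h1
      have hd' := Walk.darts_bypass_subset _ hdm
      rw [Walk.darts_append, List.mem_append] at hd'
      rcases hd' with h | h
      · have hbm : b ∈ w1.support := by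
          have := w1.dart_snd_mem_support_of_mem_darts h
          rwa [hdp] at this
        rcases hs1 b hbm with h' | h'
        · exact hne h'.symm
        · exact hnIb h'
      · have ham : a ∈ w2.support := by
          have := w2.dart_fst_mem_support_of_mem_darts h
          rwa [hdp] at this
        rcases hs2 a ham with h' | h'
        · exact hne h'
        · exact hnIa h'
    exact hcon ⟨a, b, w, hab, hdw, Walk.bypass_isPath _, by omega, hsupw⟩
  have Auv : ∀ x, InK G u v K x → GoodFrom G u v K u x → GoodTo G u v K x v → False :=
    fun x => build u v x rfl huv
  have Avu : ∀ x, InK G u v K x → GoodFrom G u v K v x → GoodTo G u v K x u → False :=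
    fun x => build v u x (Set.pair_comm v u) huv.symm
  have cover : ∀ x, InK G u v K x → GoodFrom G u v K u x ∨ GoodFrom G u v K v x := by
    intro x hx
    obtain ⟨w, hdw⟩ := hs u (hvert u) x (hvert x)
    rcases L1 G u v w hdw hx.not_mem with h1 | ⟨a, z, ha, h, w', harc, hd', hav⟩
    · exact absurd (h1 u w.start_mem_support) (by simp)
    · have hgf : GoodFrom G u v K a x :=
        goodFrom_mk G u v h harc w' hd' (sameK' G u v w' hav hx)
      rcases (by simpa using ha : a = u ∨ a = v) with rfl | rfl
      · exact Or.inl hgf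
      · exact Or.inr hgf
  have exit : ∀ x, InK G u v K x → GoodTo G u v K x u ∨ GoodTo G u v K x v := by
    intro x hx
    obtain ⟨w, hdw⟩ := hs x (hvert x) u (hvert u)
    obtain ⟨c, z, hc, h, w', harc, hd', hav⟩ := L2 G u v w hdw hx.not_mem (by simp)
    have hgt : GoodTo G u v K x c :=
      goodTo_mk G u v w' hd' h harc (sameK G u v w' hav hx)
    rcases (by simpa using hc : c = u ∨ c = v) with rfl | rfl
    · exact Or.inl hgt
    · exact Or.inr hgt
  have disj : ∀ x, InK G u v K x → GoodFrom G u v K u x → GoodFrom G u v K v x → False := by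
    intro x hx h1 h2
    rcases exit x hx with he | he
    · exact Avu x hx h2 he
    · exact Auv x hx h1 he
  have nbr : ∀ a b' : V, a ≠ b' → (∀ z : V, z ∈ ({u, v} : Set V) ↔ z = a ∨ z = b') →
      ∃ p, InK G u v K p ∧ G.und.Adj p a := by
    intro a b' hab hmem
    obtain ⟨y0, hy0⟩ := K.exists_rep
    have hx0 : InK G u v K (y0 : V) := ⟨y0, (ConnectedComponent.mem_supp_iff K y0).2 hy0, rfl⟩
    have hx0B : (y0 : V) ∉ ({u, v} : Set V) := y0.2
    have hconn : (G.und.induce ({b'}ᶜ : Set V)).Connected := by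
      apply h2.2
      simp [Set.ncard_singleton]
    have hx0b : (y0 : V) ∈ ({b'}ᶜ : Set V) := by
      simp only [Set.mem_compl_iff, Set.mem_singleton_iff]
      intro hEq; exact hx0B ((hmem _).2 (Or.inr hEq))
    have hab2 : a ∈ ({b'}ᶜ : Set V) := by simpa using hab
    obtain ⟨W⟩ := hconn.preconnected ⟨(y0 : V), hx0b⟩ ⟨a, hab2⟩
    let hom : (G.und.induce ({b'}ᶜ : Set V)) →g G.und := ⟨Subtype.val, fun {c d} h => h⟩
    have hWs : ∀ z ∈ (W.map hom).support, z ≠ b' := by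
      intro z hz
      rw [Walk.support_map, List.mem_map] at hz
      obtain ⟨t, _, rfl⟩ := hz
      exact fun h => t.2 h
    have hx0a : (y0 : V) ≠ a := fun h => hx0B ((hmem _).2 (Or.inl h))
    obtain ⟨p, w'', hadj, hav⟩ := L3 G (W.map hom) hWs hx0a
    have hpK : InK G u v K p := by
      refine sameK G u v w'' (fun z hz hmem' => ?_) hx0 p w''.end_mem_support
      rcases (hmem z).1 hmem' with rfl | rfl
      · exact (hav z hz).1 rfl
      · exact (hav z hz).2 rfl
    exact ⟨p, hpK, hadj⟩
  have Sne : ∃ p, InK G u v K p ∧ GoodFrom G u v K u p := by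
    obtain ⟨p, hpK, hadj⟩ := nbr u v huv (fun z => by simp)
    rcases hadj.2 with harc | harc
    · have hgt : GoodTo G u v K p u := goodTo_single G u v harc hadj.1 hpK
      rcases cover p hpK with h | h
      · exact ⟨p, hpK, h⟩
      · exact (Avu p hpK h hgt).elim
    · refine ⟨p, hpK, goodFrom_mk G u v hadj.symm harc Walk.nil (dirWalk_nil G) ?_⟩
      intro t ht
      rw [Walk.support_nil, List.mem_singleton] at ht
      subst ht; exact hpK
  have Tne : ∃ q, InK G u v K q ∧ GoodFrom G u v K v q := by
    obtain ⟨q, hqK, hadj⟩ := nbr v u huv.symm (fun z => by simp [or_comm])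
    rcases hadj.2 with harc | harc
    · have hgt : GoodTo G u v K q v := goodTo_single G u v harc hadj.1 hqK
      rcases cover q hqK with h | h
      · exact (Auv q hqK h hgt).elim
      · exact ⟨q, hqK, h⟩
    · refine ⟨q, hqK, goodFrom_mk G u v hadj.symm harc Walk.nil (dirWalk_nil G) ?_⟩
      intro t ht
      rw [Walk.support_nil, List.mem_singleton] at ht
      subst ht; exact hqK
  have L4 : ∀ (p' q' : V) (w : G.und.Walk p' q'), (∀ z ∈ w.support, InK G u v K z) →
      GoodFrom G u v K u p' → GoodFrom G u v K v q' → False := by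
    intro p' q' w
    induction w with
    | nil =>
      intro hsup h1 h2
      exact disj _ (hsup _ (Walk.start_mem_support _)) h1 h2
    | @cons p' m q' h w ih =>
      intro hsup h1 h2
      have hmK : InK G u v K m := hsup m
        (by rw [Walk.support_cons]; exact List.mem_cons_of_mem _ w.start_mem_support)
      have hp'K : InK G u v K p' := hsup p' (Walk.start_mem_support _)
      have hsup' : ∀ z ∈ w.support, InK G u v K z := fun z hz => hsup z
        (by rw [Walk.support_cons]; exact List.mem_cons_of_mem _ hz)
      rcases h.2 with harc | harc
      · exact ih hsup' (GoodFrom.extend G u v h1 harc h.1 hmK) h2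
      · rcases cover m hmK with hc | hc
        · exact ih hsup' hc h2
        · exact disj p' hp'K h1 (GoodFrom.extend G u v hc harc (Ne.symm h.1) hp'K)
  obtain ⟨p, hpK, hpGF⟩ := Sne
  obtain ⟨q, hqK, hqGF⟩ := Tne
  obtain ⟨yp, hyp, hyp'⟩ := id hpK
  obtain ⟨yq, hyq, hyq'⟩ := id hqK
  have hreach : (G.und.induce ({u, v}ᶜ : Set V)).Reachable yp yq := by
    apply ConnectedComponent.exact
    rw [ConnectedComponent.mem_supp_iff] at hyp hyq
    rw [hyp, hyq]
  obtain ⟨W⟩ := hreach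
  let hom : (G.und.induce ({u, v}ᶜ : Set V)) →g G.und := ⟨Subtype.val, fun {c d} h => h⟩
  have hWav : ∀ z ∈ (W.map hom).support, z ∉ ({u, v} : Set V) := by
    intro z hz
    rw [Walk.support_map, List.mem_map] at hz
    obtain ⟨t, _, rfl⟩ := hz
    exact t.2
  have hWK : ∀ z ∈ (W.map hom).support, InK G u v K z :=
    sameK G u v (W.map hom) hWav (show InK G u v K (yp : V) from hyp' ▸ hpK)
  exact L4 _ _ (W.map hom) hWK (show GoodFrom G u v K u (yp : V) from hyp' ▸ hpGF)
    (show GoodFrom G u v K v (yq : V) from hyq' ▸ hqGF)
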